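/- Let M be a closed subset of a real normed space X and S, T : M → M self-mappings with M = S(M). Suppose M has a contractive jointly continuous family ℑ = {f_x : x ∈ M} with contractiveness function Φ : (0,1) → (0,1), the pair (S,T) is a generalized JHℑ-suboperator pair with order n₀ for some n₀ ∈ ℕ, and for all x, y ∈ M and all t ∈ (0,1), ψ(∫₀^{‖Tx−Ty‖} φ(s)ds) ≤ F(ψ(∫₀^{(1/Φ(t))γ(m₄(x,y))} φ(s)ds), φᵤ(∫₀^{(1/Φ(t))γ(m₄(x,y))} φ(s)ds)), where ψ is an altering distance function, φᵤ is an ultra altering distance function, F is a C-class function, and the triple (ψ, φᵤ, F) is monotone. If M is bounded, T and S are continuous, and S is hemicompact, then M ∩ Fix(S) ∩ Fix(T) ≠ ∅. -/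

import Mathlib

open MeasureTheory Filter Topology Set

noncomputable section

/-- The integral `∫₀^a φ(t) dt`. -/
def intPhi (phi : ℝ → ℝ) (a : ℝ) : ℝ := ∫ t in (0:ℝ)..a, phi t

/-- `φ : [0,∞) → [0,∞)` is Lebesgue integrable, summable, nonnegative, with
`∫₀^ε φ(t)dt > 0` for all `ε > 0`. -/
def PhiAdmissible (phi : ℝ → ℝ) : Prop :=
  (∀ t ≥ (0:ℝ), 0 ≤ phi t) ∧ (∀ b : ℝ, IntervalIntegrable phi volume 0 b) ∧
  ∀ ε > (0:ℝ), 0 < intPhi phi ε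

/-- Altering distance function: nondecreasing, continuous, `ψ t = 0 ↔ t = 0` on `[0,∞)`. -/
def AlteringDistance (ψ : ℝ → ℝ) : Prop :=
  MonotoneOn ψ (Ici 0) ∧ ContinuousOn ψ (Ici 0) ∧ ∀ t ≥ (0:ℝ), (ψ t = 0 ↔ t = 0)

/-- Ultra altering distance function: continuous, nondecreasing, positive on `(0,∞)`,
nonnegative at `0`. -/
def UltraAltering (φu : ℝ → ℝ) : Prop :=
  ContinuousOn φu (Ici 0) ∧ MonotoneOn φu (Ici 0) ∧ (∀ t > (0:ℝ), 0 < φu t) ∧ 0 ≤ φu 0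

/-- C-class function: continuous on `[0,∞)²`, `F s t ≤ s`, and `F s t = s → s = 0 ∨ t = 0`. -/
def CClassFun (F : ℝ → ℝ → ℝ) : Prop :=
  ContinuousOn (Function.uncurry F) (Ici 0 ×ˢ Ici 0) ∧
  (∀ s ≥ (0:ℝ), ∀ t ≥ (0:ℝ), F s t ≤ s) ∧
  (∀ s ≥ (0:ℝ), ∀ t ≥ (0:ℝ), F s t = s → s = 0 ∨ t = 0)

/-- The triple `(ψ, φᵤ, F)` is monotone. -/
def MonotoneTriple (ψ φu : ℝ → ℝ) (F : ℝ → ℝ → ℝ) : Prop :=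
  ∀ x y : ℝ, 0 ≤ x → x ≤ y → F (ψ x) (φu x) ≤ F (ψ y) (φu y)

/-- The triple `(ψ, φᵤ, F)` is strictly monotone. -/
def StrictMonotoneTriple (ψ φu : ℝ → ℝ) (F : ℝ → ℝ → ℝ) : Prop :=
  ∀ x y : ℝ, 0 ≤ x → x < y → F (ψ x) (φu x) < F (ψ y) (φu y)

/-- `γ : (0,∞) → (0,∞)` is nondecreasing with `γ t < t` for all `t > 0`. -/
def GammaAdmissible (γ : ℝ → ℝ) : Prop :=
  (∀ t > (0:ℝ), 0 < γ t) ∧ MonotoneOn γ (Ioi 0) ∧ ∀ t > (0:ℝ), γ t < t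

variable {X : Type*} [NormedAddCommGroup X] [NormedSpace ℝ X]

/-- Fixed points of `T` lying in `M`. -/
def FixOn (T : X → X) (M : Set X) : Set X := {x ∈ M | T x = x}

/-- Points of coincidence `PC(S,T)` of the pair `(S,T)` over the set `M`. -/
def PCset (S T : X → X) (M : Set X) : Set X := {w | ∃ x ∈ M, S x = w ∧ T x = w}

/-- `(S,T)` is a generalized JH-operator pair with order `n` on `M`:
there is `x ∈ M` and `w = Sx = Tx ∈ PC(S,T)` with `‖w - x‖ ≤ (δ(PC(S,T)))ⁿ`. -/
def GenJHOp (S T : X → X) (M : Set X) (n : ℕ) : Prop :=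
  ∃ x ∈ M, S x = T x ∧ ‖S x - x‖ ≤ Metric.diam (PCset S T M) ^ n

/-- `(S,T)` is a generalized JH-suboperator pair with order `n` on `M` (w.r.t. `q`):
for each `k ∈ [0,1]`, `(S, T_k)` with `T_k x = (1-k)q + kTx` is a generalized JH-operator
pair with order `n`. -/
def GenJHSubOp (S T : X → X) (M : Set X) (q : X) (n : ℕ) : Prop :=
  ∀ k ∈ Icc (0:ℝ) 1, GenJHOp S (fun x => (1 - k) • q + k • T x) M n

/-- `M` is `q`-starshaped. -/
def Starshaped (M : Set X) (q : X) : Prop :=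
  q ∈ M ∧ ∀ x ∈ M, segment ℝ q x ⊆ M

def m1 (S T : X → X) (x y : X) : ℝ :=
  max (max ‖S x - S y‖ ‖S x - T x‖)
    (max ‖S y - T y‖ ((‖T x - T y‖ + ‖S y - T x‖) / 2))

def n1 (S T : X → X) (x y : X) : ℝ :=
  max ‖S x - S y‖ (max ‖T x - S x‖ ‖S y - T y‖)

def m2 (S T : X → X) (x y : X) : ℝ :=
  max (max ‖S x - S y‖ ‖S x - T x‖)
    (max ‖S y - T y‖ ((‖S x - T y‖ + ‖S y - T x‖) / 2))

def m3 (S T : X → X) (q x y : X) : ℝ :=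
  max (max ‖S x - S y‖ (Metric.infDist (S x) (segment ℝ q (T x))))
    (max (Metric.infDist (S y) (segment ℝ q (T y)))
      ((Metric.infDist (S x) (segment ℝ q (T y)) +
        Metric.infDist (S y) (segment ℝ q (T x))) / 2))

/-- `Y^{a} = {f_a(k) : k ∈ [0,1]}` for a family `f`. -/
def Yfam (f : X → ℝ → X) (a : X) : Set X := f a '' Icc (0:ℝ) 1

def m4 (f : X → ℝ → X) (S T : X → X) (x y : X) : ℝ :=
  max (max ‖S x - S y‖ (Metric.infDist (S x) (Yfam f (T x))))
    (max (Metric.infDist (S y) (Yfam f (T y)))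
      ((Metric.infDist (S x) (Yfam f (T y)) +
        Metric.infDist (S y) (Yfam f (T x))) / 2))

/-- `ℑ = {f_α}_{α ∈ M}` is a family of functions `[0,1] → M` with `f_α(1) = α`. -/
def FamilyOn (f : X → ℝ → X) (M : Set X) : Prop :=
  (∀ a ∈ M, ∀ t ∈ Icc (0:ℝ) 1, f a t ∈ M) ∧ ∀ a ∈ M, f a 1 = a

/-- The family is contractive with contractiveness function `Φ : (0,1) → (0,1)`. -/
def ContractiveFamily (f : X → ℝ → X) (M : Set X) (Phi : ℝ → ℝ) : Prop :=
  (∀ t ∈ Ioo (0:ℝ) 1, Phi t ∈ Ioo (0:ℝ) 1) ∧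
  ∀ a ∈ M, ∀ b ∈ M, ∀ t ∈ Ioo (0:ℝ) 1, ‖f a t - f b t‖ ≤ Phi t * ‖a - b‖

/-- The family is jointly continuous: `tₙ → t₀` and `αₙ → α₀` imply
`f_{αₙ}(tₙ) → f_{α₀}(t₀)`. -/
def JointlyContinuousFamily (f : X → ℝ → X) (M : Set X) : Prop :=
  ∀ (tn : ℕ → ℝ) (t0 : ℝ), (∀ n, tn n ∈ Icc (0:ℝ) 1) → t0 ∈ Icc (0:ℝ) 1 →
    Tendsto tn atTop (𝓝 t0) →
    ∀ (an : ℕ → X) (a0 : X), (∀ n, an n ∈ M) → a0 ∈ M →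
      Tendsto an atTop (𝓝 a0) →
      Tendsto (fun n => f (an n) (tn n)) atTop (𝓝 (f a0 t0))

/-- `(S,T)` is a generalized JHℑ-suboperator pair with order `n` on `M`:
for each `k ∈ [0,1]`, `(S, T_k)` with `T_k x = f_{Tx}(k)` is a generalized
JH-operator pair with order `n`. -/
def GenJHImSubOp (f : X → ℝ → X) (S T : X → X) (M : Set X) (n : ℕ) : Prop :=
  ∀ k ∈ Icc (0:ℝ) 1, GenJHOp S (fun x => f (T x) k) M n

/-- Weak convergence of a sequence. -/
def WeakTendsTo (x : ℕ → X) (a : X) : Prop :=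
  ∀ f : StrongDual ℝ X, Tendsto (fun n => f (x n)) atTop (𝓝 (f a))

/-- Weak (sequential) closure. -/
def WSeqCl (A : Set X) : Set X := {a | ∃ x : ℕ → X, (∀ n, x n ∈ A) ∧ WeakTendsTo x a}

/-- Weak (sequential) compactness. -/
def WSeqCompact (A : Set X) : Prop :=
  ∀ x : ℕ → X, (∀ n, x n ∈ A) →
    ∃ a ∈ A, ∃ g : ℕ → ℕ, StrictMono g ∧ WeakTendsTo (x ∘ g) a

/-- `T` is completely continuous on `M`: weak convergence implies strong
convergence of images. -/
def CompletelyContinuousOn (T : X → X) (M : Set X) : Prop :=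
  ∀ (x : ℕ → X) (a : X), (∀ n, x n ∈ M) → a ∈ M → WeakTendsTo x a →
    Tendsto (fun n => T (x n)) atTop (𝓝 (T a))

/-- `S` is weakly continuous on `M`. -/
def WeaklyContinuousOn (S : X → X) (M : Set X) : Prop :=
  ∀ (x : ℕ → X) (a : X), (∀ n, x n ∈ M) → a ∈ M → WeakTendsTo x a →
    WeakTendsTo (fun n => S (x n)) (S a)

/-- `G` is demiclosed at `0` on `M`. -/
def DemiclosedAtZero (G : X → X) (M : Set X) : Prop :=
  ∀ (x : ℕ → X) (a : X), (∀ n, x n ∈ M) → a ∈ M → WeakTendsTo x a →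
    Tendsto (fun n => G (x n)) atTop (𝓝 (0 : X)) → G a = 0

/-- `T` is hemicompact on `M`. -/
def Hemicompact (T : X → X) (M : Set X) : Prop :=
  ∀ x : ℕ → X, (∀ n, x n ∈ M) →
    Tendsto (fun n => ‖x n - T (x n)‖) atTop (𝓝 (0 : ℝ)) →
    ∃ (a : X) (g : ℕ → ℕ), StrictMono g ∧ Tendsto (x ∘ g) atTop (𝓝 a)

/-- Opial's condition. -/
def OpialCondition (Y : Type*) [NormedAddCommGroup Y] [NormedSpace ℝ Y] : Prop :=
  ∀ (x : ℕ → Y) (a : Y), WeakTendsTo x a → ∀ y : Y, y ≠ a →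
    liminf (fun n => ‖x n - a‖) atTop < liminf (fun n => ‖x n - y‖) atTop

/-- `P_M(u)`, the set of best approximations to `u` out of `M`. -/
def PMset (M : Set X) (u : X) : Set X := {x ∈ M | ‖x - u‖ = Metric.infDist u M}

/-- `C_M^S(u) = {x ∈ M : Sx ∈ P_M(u)}`. -/
def CMSset (M : Set X) (S : X → X) (u : X) : Set X := {x ∈ M | S x ∈ PMset M u}



lemma intPhi_mono_aux {phi : ℝ → ℝ}
    (hpos : ∀ t ≥ (0:ℝ), 0 ≤ phi t)
    (hint : ∀ b : ℝ, IntervalIntegrable phi volume 0 b)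
    {a b : ℝ} (ha : 0 ≤ a) (hab : a ≤ b) :
    intPhi phi a ≤ intPhi phi b := by
  unfold intPhi
  have hab' : IntervalIntegrable phi volume a b := (hint a).symm.trans (hint b)
  have hsplit := intervalIntegral.integral_add_adjacent_intervals (hint a) hab'
  have hnn : 0 ≤ ∫ t in a..b, phi t :=
    intervalIntegral.integral_nonneg hab (fun u hu => hpos u (ha.trans hu.1))
  linarith

set_option maxHeartbeats 2000000 in
theorem stmt_10 {X : Type*} [NormedAddCommGroup X] [NormedSpace ℝ X]
    (M : Set X) (hMcl : IsClosed M) (S T : X → X)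
    (hS : MapsTo S M M) (hT : MapsTo T M M) (hSM : S '' M = M)
    (f : X → ℝ → X) (Phi : ℝ → ℝ)
    (hfam : FamilyOn f M) (hcf : ContractiveFamily f M Phi)
    (hjc : JointlyContinuousFamily f M)
    (phi ψ φu : ℝ → ℝ) (F : ℝ → ℝ → ℝ)
    (hphi : PhiAdmissible phi) (hψ : AlteringDistance ψ) (hφu : UltraAltering φu)
    (hF : CClassFun F) (hmono : MonotoneTriple ψ φu F)
    (γ : ℝ → ℝ) (hγ : GammaAdmissible γ)
    (n₀ : ℕ) (hn₀ : 1 ≤ n₀) (hJH : GenJHImSubOp f S T M n₀)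
    (hcontr : ∀ x ∈ M, ∀ y ∈ M, ∀ t ∈ Ioo (0:ℝ) 1,
      ψ (intPhi phi ‖T x - T y‖) ≤
        F (ψ (intPhi phi ((1 / Phi t) * γ (m4 f S T x y))))
          (φu (intPhi phi ((1 / Phi t) * γ (m4 f S T x y)))))
    (hMb : Bornology.IsBounded M)
    (hTcont : ContinuousOn T M) (hScont : ContinuousOn S M)
    (hSh : Hemicompact S M) :
    ∃ x ∈ M, S x = x ∧ T x = x := by
  classical
  obtain ⟨hphi_pos, hphi_int, hphi_eps⟩ := hphi
  obtain ⟨hψmono, hψcont, hψiff⟩ := hψ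
  obtain ⟨hPhi_mem, hcf2⟩ := hcf
  obtain ⟨hγpos, hγmono, hγlt⟩ := hγ
  have hψ0 : ψ 0 = 0 := (hψiff 0 le_rfl).2 rfl
  -- Step 1: each coincidence set is a subsingleton
  have hsub : ∀ k ∈ Ioo (0:ℝ) 1, (PCset S (fun x => f (T x) k) M).Subsingleton := by
    intro k hk w1 hw1 w2 hw2
    obtain ⟨x, hx, hSx, hTkx⟩ := hw1
    obtain ⟨y, hy, hSy, hTky⟩ := hw2
    rw [← hSx, ← hSy]
    by_contra hne
    have hfx : f (T x) k = S x := hTkx.trans hSx.symm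
    have hfy : f (T y) k = S y := hTky.trans hSy.symm
    set d := ‖S x - S y‖ with hd_def
    have hd : 0 < d := norm_pos_iff.mpr (sub_ne_zero_of_ne hne)
    have hkIcc : k ∈ Icc (0:ℝ) 1 := ⟨hk.1.le, hk.2.le⟩
    have hYx : S x ∈ Yfam f (T x) := ⟨k, hkIcc, hfx⟩
    have hYy : S y ∈ Yfam f (T y) := ⟨k, hkIcc, hfy⟩
    have h1 : Metric.infDist (S x) (Yfam f (T x)) = 0 := Metric.infDist_zero_of_mem hYx
    have h2 : Metric.infDist (S y) (Yfam f (T y)) = 0 := Metric.infDist_zero_of_mem hYy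
    have h3 : Metric.infDist (S x) (Yfam f (T y)) ≤ d := by
      have := Metric.infDist_le_dist_of_mem (x := S x) hYy
      rwa [dist_eq_norm] at this
    have h4 : Metric.infDist (S y) (Yfam f (T x)) ≤ d := by
      have := Metric.infDist_le_dist_of_mem (x := S y) hYx
      rw [dist_eq_norm, norm_sub_rev] at this
      exact this
    have hm4 : m4 f S T x y = d := by
      unfold m4
      rw [h1, h2]
      refine le_antisymm ?_ (le_trans (le_max_left d 0) (le_max_left _ _))
      exact max_le (max_le le_rfl hd.le) (max_le hd.le (by linarith))
    have hPhik := hPhi_mem k hk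
    have hdle : d ≤ Phi k * ‖T x - T y‖ := by
      rw [hd_def, ← hfx, ← hfy]
      exact hcf2 (T x) (hT hx) (T y) (hT hy) k hk
    have hγd : γ d < d := hγlt d hd
    have hTT : (1 / Phi k) * γ d ≤ ‖T x - T y‖ := by
      rw [one_div, inv_mul_le_iff₀ hPhik.1]
      calc γ d ≤ d := hγd.le
        _ ≤ Phi k * ‖T x - T y‖ := hdle
    set A := (1 / Phi k) * γ d with hA_def
    have hApos : 0 < A := mul_pos (one_div_pos.mpr hPhik.1) (hγpos d hd)
    have hIApos : 0 < intPhi phi A := hphi_eps A hApos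
    have hIAle : intPhi phi A ≤ intPhi phi ‖T x - T y‖ :=
      intPhi_mono_aux hphi_pos hphi_int hApos.le hTT
    have hITnn : (0:ℝ) ≤ intPhi phi ‖T x - T y‖ := hIApos.le.trans hIAle
    have hψIA_nn : 0 ≤ ψ (intPhi phi A) := by
      have := hψmono (mem_Ici.mpr le_rfl) (mem_Ici.mpr hIApos.le) hIApos.le
      rwa [hψ0] at this
    have hφuIA : 0 < φu (intPhi phi A) := hφu.2.2.1 _ hIApos
    have hcon := hcontr x hx y hy k hk
    rw [hm4, ← hA_def] at hcon
    have hψle : ψ (intPhi phi A) ≤ ψ (intPhi phi ‖T x - T y‖) :=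
      hψmono (mem_Ici.mpr hIApos.le) (mem_Ici.mpr hITnn) hIAle
    have hFle : F (ψ (intPhi phi A)) (φu (intPhi phi A)) ≤ ψ (intPhi phi A) :=
      hF.2.1 _ hψIA_nn _ hφuIA.le
    have heqF : F (ψ (intPhi phi A)) (φu (intPhi phi A)) = ψ (intPhi phi A) :=
      le_antisymm hFle (hψle.trans hcon)
    rcases hF.2.2 _ hψIA_nn _ hφuIA.le heqF with h | h
    · exact hIApos.ne' ((hψiff _ hIApos.le).1 h)
    · exact hφuIA.ne' h
  -- Step 2: common fixed points of S and T_k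
  have hkey : ∀ k ∈ Ioo (0:ℝ) 1, ∃ x ∈ M, S x = x ∧ x = f (T x) k := by
    intro k hk
    obtain ⟨x, hx, hSTx, hdiam⟩ := hJH k ⟨hk.1.le, hk.2.le⟩
    have hdz : Metric.diam (PCset S (fun x => f (T x) k) M) = 0 :=
      Metric.diam_subsingleton (hsub k hk)
    rw [hdz, zero_pow (by omega : n₀ ≠ 0)] at hdiam
    have hSxx : S x = x := by
      have h0 : ‖S x - x‖ = 0 := le_antisymm hdiam (norm_nonneg _)
      rw [norm_eq_zero, sub_eq_zero] at h0
      exact h0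
    exact ⟨x, hx, hSxx, hSxx.symm.trans hSTx⟩
  -- Step 3: take k → 1 and use hemicompactness
  set kseq : ℕ → ℝ := fun n => 1 - 1 / ((n:ℝ) + 2) with hkseq
  have hkmem : ∀ n, kseq n ∈ Ioo (0:ℝ) 1 := by
    intro n
    have hn : (0:ℝ) ≤ (n:ℝ) := Nat.cast_nonneg n
    have h1 : 0 < 1 / ((n:ℝ) + 2) := by positivity
    have h2 : 1 / ((n:ℝ) + 2) < 1 := by
      rw [div_lt_one (by linarith)]; linarith
    exact ⟨by simp only [hkseq]; linarith, by simp only [hkseq]; linarith⟩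
  have hklim : Tendsto kseq atTop (𝓝 1) := by
    have h : Tendsto (fun n : ℕ => ((n:ℝ) + 2)) atTop atTop :=
      tendsto_natCast_atTop_atTop.atTop_add tendsto_const_nhds
    have := h.inv_tendsto_atTop
    simpa [hkseq, one_div] using tendsto_const_nhds.sub this
  choose xs hxsM hxsS hxsf using fun n => hkey (kseq n) (hkmem n)
  have h0 : Tendsto (fun n => ‖xs n - S (xs n)‖) atTop (𝓝 (0:ℝ)) := by
    have heq : (fun n => ‖xs n - S (xs n)‖) = fun _ => (0:ℝ) :=
      funext fun n => by rw [hxsS n, sub_self, norm_zero]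
    rw [heq]; exact tendsto_const_nhds
  obtain ⟨a, g, hg, hconv⟩ := hSh xs hxsM h0
  have haM : a ∈ M := hMcl.mem_of_tendsto hconv (Eventually.of_forall fun n => hxsM (g n))
  have hW : Tendsto (xs ∘ g) atTop (𝓝[M] a) :=
    tendsto_nhdsWithin_of_tendsto_nhds_of_eventually_within _ hconv
      (Eventually.of_forall fun n => hxsM (g n))
  have hSa : S a = a := by
    have hS' : Tendsto (fun n => S (xs (g n))) atTop (𝓝 (S a)) :=
      (hScont a haM).tendsto.comp hW
    have hS'' : Tendsto (fun n => S (xs (g n))) atTop (𝓝 a) := by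
      have heq : (fun n => S (xs (g n))) = fun n => xs (g n) :=
        funext fun n => hxsS (g n)
      rw [heq]; exact hconv
    exact tendsto_nhds_unique hS' hS''
  have hTconv : Tendsto (fun n => T (xs (g n))) atTop (𝓝 (T a)) :=
    (hTcont a haM).tendsto.comp hW
  have hklim' : Tendsto (fun n => kseq (g n)) atTop (𝓝 1) := hklim.comp hg.tendsto_atTop
  have hjc' := hjc (fun n => kseq (g n)) 1
    (fun n => ⟨(hkmem (g n)).1.le, (hkmem (g n)).2.le⟩) ⟨zero_le_one, le_rfl⟩ hklim'
    (fun n => T (xs (g n))) (T a) (fun n => hT (hxsM (g n))) (hT haM) hTconv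
  have hfeq : (fun n => f (T (xs (g n))) (kseq (g n))) = fun n => xs (g n) :=
    funext fun n => (hxsf (g n)).symm
  rw [hfeq, hfam.2 (T a) (hT haM)] at hjc'
  exact ⟨a, haM, hSa, tendsto_nhds_unique hjc' hconv⟩


end
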